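/- For all real numbers A, ρ and every ε ∈ (0,1), the clipped PPO loss satisfies the pointwise identity −min(ρ·A, clip(ρ, 1−ε, 1+ε)·A) = l'(ρ) − (1 + ε·sgn(A))·A, where l'(ρ) = |A|·|ρ − (1 + ε·sgn(A))| if (ρ − (1 + ε·sgn(A)))·A ≤ 0 and l'(ρ) = 0 otherwise. In particular, the negative PPO surrogate objective differs from the advantage-weighted one-sided absolute-error loss l' by a quantity independent of ρ, so optimizing the PPO objective over ρ is equivalent to minimizing l'. -/
import Mathlib


theorem stmt12 (A ρ ε : ℝ) (hε : ε ∈ Set.Ioo (0 : ℝ) 1) :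
    -(min (ρ * A) (max (1 - ε) (min (1 + ε) ρ) * A)) =
      (if (ρ - (1 + ε * Real.sign A)) * A ≤ 0
        then |A| * |ρ - (1 + ε * Real.sign A)|
        else 0)
      - (1 + ε * Real.sign A) * A := by
  obtain ⟨hε0, hε1⟩ := hε
  rcases lt_trichotomy A 0 with hA | hA | hA
  · rw [Real.sign_of_neg hA, abs_of_neg hA]
    rcases lt_or_ge ρ (1 - ε) with h | h
    · rw [min_eq_right (by linarith : ρ ≤ 1 + ε), max_eq_left h.le,
        min_eq_right (by nlinarith : (1 - ε) * A ≤ ρ * A)]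
      rw [if_neg (by push_neg; nlinarith)]
      ring
    · rw [max_eq_right (le_min (by linarith) h),
        min_eq_left (by nlinarith [min_le_right (1 + ε) ρ] : ρ * A ≤ min (1 + ε) ρ * A)]
      rw [if_pos (by nlinarith), abs_of_nonneg (by linarith : (0:ℝ) ≤ ρ - (1 + ε * (-1)))]
      ring
  · simp [hA]
  · rw [Real.sign_of_pos hA, abs_of_pos hA]
    rcases le_or_gt ρ (1 + ε) with h | h
    · rw [min_eq_right h,
        min_eq_left (by nlinarith [le_max_right (1 - ε) ρ] : ρ * A ≤ max (1 - ε) ρ * A)]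
      rw [if_pos (by nlinarith), abs_of_nonpos (by linarith : ρ - (1 + ε * 1) ≤ 0)]
      ring
    · rw [min_eq_left (by linarith : (1:ℝ) + ε ≤ ρ), max_eq_right (by linarith : (1:ℝ) - ε ≤ 1 + ε),
        min_eq_right (by nlinarith : (1 + ε) * A ≤ ρ * A)]
      rw [if_neg (by push_neg; nlinarith)]
      ring
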